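/- Let t be a binary planar tree. For each rooted subtree z ∈ E_t, let f(t,z) be the unique forest with t = f(t,z) ∘ z, and let P(t,z) be the tuple of path words of f(t,z) in F₂ (path from the root of the tree of f(t,z) containing a given leaf of t to that leaf, a left turn multiplying by a on the left, a right turn by b). Then the map z ↦ P(t,z) from E_t to tuples of elements of F₂ is injective. -/
import Mathlib


/-- Binary planar trees. -/
inductive BTree
  | leaf : BTree
  | node : BTree → BTree → BTree
deriving DecidableEq

namespace BTree

/-- The free group F₂ = ⟨a,b⟩. -/
abbrev F2 := FreeGroup (Fin 2)

def a : F2 := FreeGroup.of 0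
def b : F2 := FreeGroup.of 1

/-- Path words of a binary planar tree, indexed by its leaves from left to right:
`P(leaf) = e`, `P(t₁ • t₂)_i = P(t₁)_i · a` on leaves of `t₁`, `P(t₂)_i · b` on leaves of `t₂`. -/
def pathWords : BTree → List F2
  | leaf => [1]
  | node l r => (pathWords l).map (· * a) ++ (pathWords r).map (· * b)

/-- The list of rooted subtrees of `t` (containing the root of `t`). -/
def rootedSubtrees : BTree → List BTree
  | leaf => [leaf]
  | node l r =>
      leaf :: (rootedSubtrees l).flatMap (fun z₁ => (rootedSubtrees r).map (node z₁))

/-- `P(t,z)`: the tuple of path words of the forest `f(t,z)` obtained by cutting `t` along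
the leaves of the rooted subtree `z` (so that `t = f(t,z) ∘ z`); each word is computed
within the tree of `f(t,z)` containing the given leaf of `t`. -/
def cutWords : BTree → BTree → List F2
  | t, leaf => pathWords t
  | node t₁ t₂, node z₁ z₂ => cutWords t₁ z₁ ++ cutWords t₂ z₂
  | leaf, node _ _ => []

end BTree

open BTree

namespace BTree

def numLeaves : BTree → ℕ
  | leaf => 1
  | node l r => numLeaves l + numLeaves r

def leftDepth : BTree → ℤ
  | leaf => 0
  | node l _ => leftDepth l + 1

/-- exponent-sum homomorphism -/
noncomputable def phi (w : F2) : ℤ :=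
  Multiplicative.toAdd (FreeGroup.lift (fun _ => Multiplicative.ofAdd (1 : ℤ)) w)

lemma phi_mul (x y : F2) : phi (x * y) = phi x + phi y := by
  simp [phi]

lemma phi_a : phi a = 1 := by simp [phi, a]
lemma phi_b : phi b = 1 := by simp [phi, b]
lemma phi_one : phi 1 = 0 := by simp [phi]

lemma pathWords_length (t : BTree) : (pathWords t).length = numLeaves t := by
  induction t with
  | leaf => simp [pathWords, numLeaves]
  | node l r hl hr => simp [pathWords, numLeaves, hl, hr]

lemma numLeaves_pos (t : BTree) : 0 < numLeaves t := by
  induction t with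
  | leaf => simp [numLeaves]
  | node l r hl hr => simp [numLeaves]; omega

lemma pathWords_ne_nil (t : BTree) : pathWords t ≠ [] := by
  have h1 := pathWords_length t
  have h2 := numLeaves_pos t
  intro h; rw [h] at h1; simp at h1; omega

lemma cutWords_length {t z : BTree} (hz : z ∈ rootedSubtrees t) :
    (cutWords t z).length = numLeaves t := by
  induction t generalizing z with
  | leaf =>
    simp [rootedSubtrees] at hz
    subst hz
    simp [cutWords, pathWords, numLeaves]
  | node l r hl hr =>
    simp [rootedSubtrees] at hz
    rcases hz with rfl | ⟨z₁, hz₁, z₂, hz₂, rfl⟩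
    · simpa [cutWords] using pathWords_length (node l r)
    · simp [cutWords, numLeaves, hl hz₁, hr hz₂]

lemma cutWords_ne_nil {t z : BTree} (hz : z ∈ rootedSubtrees t) :
    cutWords t z ≠ [] := by
  have h := cutWords_length hz
  have := numLeaves_pos t
  intro hn; rw [hn] at h; simp at h; omega

lemma phi_headI_pathWords (t : BTree) : phi ((pathWords t).headI) = leftDepth t := by
  induction t with
  | leaf => simp [pathWords, leftDepth, phi_one]
  | node l r hl hr =>
    have h1 : pathWords l ≠ [] := pathWords_ne_nil l
    obtain ⟨w, ws, hw⟩ := List.exists_cons_of_ne_nil h1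
    simp [pathWords, hw, leftDepth, phi_mul, phi_a]
    rw [hw] at hl; simpa using hl

lemma phi_headI_cutWords {t z : BTree} (hz : z ∈ rootedSubtrees t) :
    phi ((cutWords t z).headI) ≤ leftDepth t := by
  induction t generalizing z with
  | leaf =>
    simp [rootedSubtrees] at hz
    subst hz
    simp [cutWords, pathWords, leftDepth, phi_one]
  | node l r hl hr =>
    simp [rootedSubtrees] at hz
    rcases hz with rfl | ⟨z₁, hz₁, z₂, hz₂, rfl⟩
    · rw [show cutWords (node l r) leaf = pathWords (node l r) from rfl,
        phi_headI_pathWords]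
    · have h1 : cutWords l z₁ ≠ [] := cutWords_ne_nil hz₁
      obtain ⟨w, ws, hw⟩ := List.exists_cons_of_ne_nil h1
      have := hl hz₁
      rw [hw] at this
      simp only [cutWords, hw, List.cons_append, List.headI_cons]
      simp only [List.headI_cons] at this
      have : phi w ≤ leftDepth l := this
      simp only [leftDepth]
      omega

lemma cutWords_node_ne_leaf {l r z₁ z₂ : BTree}
    (hz₁ : z₁ ∈ rootedSubtrees l) (hz₂ : z₂ ∈ rootedSubtrees r) :
    cutWords (node l r) (node z₁ z₂) ≠ cutWords (node l r) leaf := by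
  intro h
  have e1 : phi ((cutWords (node l r) leaf).headI) = leftDepth (node l r) := by
    rw [show cutWords (node l r) leaf = pathWords (node l r) from rfl,
      phi_headI_pathWords]
  have h1 : cutWords l z₁ ≠ [] := cutWords_ne_nil hz₁
  obtain ⟨w, ws, hw⟩ := List.exists_cons_of_ne_nil h1
  have e2 : phi ((cutWords (node l r) (node z₁ z₂)).headI) ≤ leftDepth l := by
    have := phi_headI_cutWords hz₁
    rw [hw] at this
    simp only [cutWords, hw, List.cons_append, List.headI_cons]
    simpa using this
  rw [h, e1] at e2
  simp only [leftDepth] at e2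
  omega

end BTree

/-- The map `z ↦ P(t,z)` from the rooted subtrees of `t` to tuples of elements of `F₂`
is injective. -/
theorem stmt11 (t : BTree) :
    ∀ z₁ ∈ rootedSubtrees t, ∀ z₂ ∈ rootedSubtrees t,
      cutWords t z₁ = cutWords t z₂ → z₁ = z₂ := by
  induction t with
  | leaf =>
    intro z₁ hz₁ z₂ hz₂ _
    simp [rootedSubtrees] at hz₁ hz₂
    rw [hz₁, hz₂]
  | node l r hl hr =>
    intro z₁ hz₁ z₂ hz₂ h
    simp [rootedSubtrees] at hz₁ hz₂
    rcases hz₁ with rfl | ⟨u₁, hu₁, u₂, hu₂, rfl⟩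
    · rcases hz₂ with rfl | ⟨v₁, hv₁, v₂, hv₂, rfl⟩
      · rfl
      · exact absurd h.symm (cutWords_node_ne_leaf hv₁ hv₂)
    · rcases hz₂ with rfl | ⟨v₁, hv₁, v₂, hv₂, rfl⟩
      · exact absurd h (cutWords_node_ne_leaf hu₁ hu₂)
      · have hlen : (cutWords l u₁).length = (cutWords l v₁).length := by
          rw [cutWords_length hu₁, cutWords_length hv₁]
        simp only [cutWords] at h
        obtain ⟨h₁, h₂⟩ := List.append_inj h hlen
        rw [hl u₁ hu₁ v₁ hv₁ h₁, hr u₂ hu₂ v₂ hv₂ h₂]
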